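/- Let I be a squarefree monomial ideal of codimension (height) at least 2 in K[x_1,...,x_n], let π(I) denote the least common multiple of the minimal monomial generators of I, and let d = deg π(I). Then π(I)^{r-1} ∈ I^r for all r ≥ d. -/
import Mathlib

open MvPolynomial

private lemma multiset_prod_mem_pow {R : Type*} [CommRing R] (I : Ideal R)
    (M : Multiset R) (h : ∀ x ∈ M, x ∈ I) : M.prod ∈ I ^ Multiset.card M := by
  induction M using Multiset.induction with
  | empty => simp [Ideal.one_eq_top]
  | cons a M ih =>
    simp only [Multiset.prod_cons, Multiset.card_cons, pow_succ']
    exact Ideal.mul_mem_mul (h a (Multiset.mem_cons_self a M))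
      (ih fun x hx => h x (Multiset.mem_cons_of_mem hx))

private lemma multiset_prod_monomial {K : Type*} [Field K] {n : ℕ}
    (M : Multiset (Fin n →₀ ℕ)) :
    (M.map fun a => (monomial a (1 : K))).prod = monomial M.sum (1 : K) := by
  induction M using Multiset.induction with
  | empty => simp
  | cons a M ih => simp [ih, monomial_mul]

/-- If `I` is a squarefree monomial ideal of codimension at least `2`, `π(I)` the lcm of
its minimal generators and `d = deg π(I)`, then `π(I)^{r-1} ∈ I^r` for all `r ≥ d`. -/
theorem stmt4 {K : Type*} [Field K] {n : ℕ}
    (S : Finset (Fin n →₀ ℕ)) (hne : S.Nonempty)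
    (hsf : ∀ a ∈ S, ∀ i, a i ≤ 1)
    (π : Fin n →₀ ℕ) (hπ : π = S.sup id)
    (hcodim : ∀ i : Fin n, π i ≠ 0 → ∃ a ∈ S, a i = 0)
    (d : ℕ) (hd : d = π.sum fun _ e => e)
    (r : ℕ) (hr : d ≤ r) :
    MvPolynomial.monomial ((r - 1) • π) (1 : K) ∈
      (Ideal.span ((fun e => MvPolynomial.monomial e (1 : K)) '' (S : Set (Fin n →₀ ℕ)))) ^ r := by
  classical
  rcases r with _ | r
  · simp [Ideal.one_eq_top]
  set I := Ideal.span ((fun e => MvPolynomial.monomial e (1 : K)) '' (S : Set (Fin n →₀ ℕ)))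
    with hI
  -- every generator's exponent is ≤ π pointwise
  have hleπ : ∀ a ∈ S, ∀ i, a i ≤ π i := by
    intro a ha i
    have : a ≤ S.sup id := Finset.le_sup (f := id) ha
    rw [hπ]; exact this i
  -- π is 0/1 valued
  have hπle1 : ∀ i, π i ≤ 1 := by
    intro i
    rw [hπ]
    refine Finset.sup_induction (p := fun f : Fin n →₀ ℕ => f i ≤ 1) ?_ ?_ (fun a ha => hsf a ha i)
    · show (0 : Fin n →₀ ℕ) i ≤ 1
      simp
    · intro f hf g hg
      rw [Finsupp.sup_apply]
      exact sup_le hf hg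
  -- d is the cardinality of the support of π
  have hcard : π.support.card = d := by
    rw [hd, Finsupp.sum]
    have h1 : ∀ i ∈ π.support, π i = 1 := fun i hi => by
      have h2 : π i ≠ 0 := Finsupp.mem_support_iff.mp hi
      have := hπle1 i
      omega
    rw [Finset.sum_congr rfl h1, Finset.sum_const, smul_eq_mul, mul_one]
  -- choose witnesses
  obtain ⟨a₀, ha₀⟩ := hne
  have hg : ∀ i : Fin n, ∃ a, a ∈ S ∧ (π i ≠ 0 → a i = 0) := by
    intro i
    by_cases h : π i ≠ 0
    · obtain ⟨a, ha, ha0⟩ := hcodim i h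
      exact ⟨a, ha, fun _ => ha0⟩
    · exact ⟨a₀, ha₀, fun h' => absurd h' h⟩
  choose g hgS hg0 using hg
  -- the multiset of r+1 chosen generators
  set M : Multiset (Fin n →₀ ℕ) :=
    π.support.val.map g + Multiset.replicate (r + 1 - d) a₀ with hM
  have hMcard : Multiset.card M = r + 1 := by
    simp [hM, hcard]
    omega
  have hMS : ∀ x ∈ M, x ∈ S := by
    intro x hx
    rw [hM] at hx
    rcases Multiset.mem_add.mp hx with h | h
    · obtain ⟨j, _, rfl⟩ := Multiset.mem_map.mp h
      exact hgS j
    · rw [Multiset.eq_of_mem_replicate h]; exact ha₀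
  -- the sum of the chosen exponents is ≤ r • π pointwise
  have hsum : M.sum ≤ (r + 1 - 1) • π := by
    rw [Finsupp.le_def]
    intro i
    have hMi : M.sum i = (∑ j ∈ π.support, (g j) i) + (r + 1 - d) * a₀ i := by
      have := map_multiset_sum (Finsupp.applyAddHom (M := ℕ) i) M
      simp only [Finsupp.applyAddHom_apply] at this
      rw [this, hM, Multiset.map_add, Multiset.sum_add, Multiset.map_map,
        Multiset.map_replicate, Multiset.sum_replicate, smul_eq_mul]
      rfl
    have hsm : ((r + 1 - 1) • π) i = r * π i := by
      simp [Finsupp.smul_apply]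
    rw [hMi, hsm]
    by_cases hi : π i = 0
    · have h0 : ∀ a ∈ S, a i = 0 := fun a ha => by
        have := hleπ a ha i; omega
      rw [Finset.sum_eq_zero (fun j _ => h0 (g j) (hgS j)), h0 a₀ ha₀]
      simp
    · have hi1 : π i = 1 := by have := hπle1 i; omega
      have hiS : i ∈ π.support := Finsupp.mem_support_iff.mpr hi
      have hd1 : 1 ≤ d := hcard ▸ Finset.card_pos.mpr ⟨i, hiS⟩
      have hsplit : (∑ j ∈ π.support, (g j) i)
          = (g i) i + ∑ j ∈ π.support.erase i, (g j) i :=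
        (Finset.add_sum_erase _ _ hiS).symm
      have hgz : (g i) i = 0 := hg0 i hi
      have hbound : ∑ j ∈ π.support.erase i, (g j) i ≤ d - 1 := by
        calc ∑ j ∈ π.support.erase i, (g j) i
            ≤ ∑ j ∈ π.support.erase i, 1 :=
              Finset.sum_le_sum (fun j _ => hsf (g j) (hgS j) i)
          _ = (π.support.erase i).card := by simp
          _ = d - 1 := by rw [Finset.card_erase_of_mem hiS, hcard]
      have ha₀i : a₀ i ≤ 1 := hsf a₀ ha₀ i
      have : (r + 1 - d) * a₀ i ≤ r + 1 - d := by
        nlinarith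
      rw [hsplit, hgz, hi1]
      omega
  -- write the target monomial as (remainder) * product of generators
  set c : Fin n →₀ ℕ := (r + 1 - 1) • π - M.sum with hc
  have hceq : c + M.sum = (r + 1 - 1) • π := tsub_add_cancel_of_le hsum
  have hprod : (M.map fun a => (monomial a (1 : K))).prod ∈ I ^ (r + 1) := by
    have := multiset_prod_mem_pow I (M.map fun a => (monomial a (1 : K)))
      (fun x hx => by
        obtain ⟨a, ha, rfl⟩ := Multiset.mem_map.mp hx
        exact Ideal.subset_span ⟨a, hMS a ha, rfl⟩)
    rwa [Multiset.card_map, hMcard] at this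
  have key : (monomial ((r + 1 - 1) • π) (1 : K))
      = monomial c (1 : K) * (M.map fun a => (monomial a (1 : K))).prod := by
    rw [multiset_prod_monomial, monomial_mul, one_mul, hceq]
  rw [key]
  exact Ideal.mul_mem_left _ _ hprod
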